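/- Let H, K be Hilbert spaces, K̃ : K → H bounded, S : K → K bounded self-adjoint, R = K̃* K̃ assumed to be a compact nonnegative operator admitting a square root R^{1/2}, and suppose K̃ S K̃* is compact. Then for every k, the k-th singular value of G = K̃ S K̃* equals the k-th singular value of P = R^{1/2} S R^{1/2}; that is, s_k(G) = s_k(R^{1/2} S R^{1/2}). -/

import Mathlib

open ContinuousLinearMap

/-- The `k`-th singular value (approximation number) of a bounded operator between Hilbert
spaces: the distance from `T` to the operators of rank at most `k`. For compact operators on
Hilbert spaces this coincides with the `k`-th singular value (eigenvalues of `(T*T)^{1/2}`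
in nonincreasing order, indexed from `0`). -/
noncomputable def singularValue {E F : Type*}
    [NormedAddCommGroup E] [InnerProductSpace ℂ E]
    [NormedAddCommGroup F] [InnerProductSpace ℂ F]
    (T : E →L[ℂ] F) (k : ℕ) : ℝ :=
  sInf {r : ℝ | ∃ A : E →L[ℂ] F,
    Module.rank ℂ (LinearMap.range (A : E →ₗ[ℂ] F)) ≤ (k : Cardinal) ∧ r = ‖T - A‖}

universe uE uF uE' uF'

lemma singularValue_comp_le
    {E : Type uE} {F : Type uF} {E' : Type uE'} {F' : Type uF'} [NormedAddCommGroup E] [InnerProductSpace ℂ E]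
    [NormedAddCommGroup F] [InnerProductSpace ℂ F]
    [NormedAddCommGroup E'] [InnerProductSpace ℂ E']
    [NormedAddCommGroup F'] [InnerProductSpace ℂ F']
    (U : F →L[ℂ] F') (T : E →L[ℂ] F) (V : E' →L[ℂ] E)
    (hU : ‖U‖ ≤ 1) (hV : ‖V‖ ≤ 1) (k : ℕ) :
    singularValue (U ∘L T ∘L V) k ≤ singularValue T k := by
  have hbdd : ∀ (T₀ : E' →L[ℂ] F'), BddBelow {r : ℝ | ∃ A : E' →L[ℂ] F',
      Module.rank ℂ (LinearMap.range (A : E' →ₗ[ℂ] F')) ≤ (k : Cardinal) ∧ r = ‖T₀ - A‖} := by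
    intro T₀
    exact ⟨0, by rintro r ⟨A, -, rfl⟩; exact norm_nonneg _⟩
  apply le_csInf
  · exact ⟨‖T - 0‖, 0, by simp, rfl⟩
  · rintro r ⟨A, hA, rfl⟩
    calc singularValue (U ∘L T ∘L V) k ≤ ‖(U ∘L T ∘L V) - (U ∘L A ∘L V)‖ := by
          apply csInf_le (hbdd _)
          refine ⟨U ∘L A ∘L V, ?_, rfl⟩
          have hco : ((U ∘L A ∘L V : E' →L[ℂ] F') : E' →ₗ[ℂ] F')
              = (U : F →ₗ[ℂ] F') ∘ₗ ((A : E →ₗ[ℂ] F) ∘ₗ (V : E' →ₗ[ℂ] E)) := rfl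
          rw [hco]
          have h1 := LinearMap.lift_rank_comp_le_right
            ((A : E →ₗ[ℂ] F) ∘ₗ (V : E' →ₗ[ℂ] E)) (U : F →ₗ[ℂ] F')
          have h2 : LinearMap.rank ((A : E →ₗ[ℂ] F) ∘ₗ (V : E' →ₗ[ℂ] E)) ≤ (k : Cardinal) :=
            (LinearMap.rank_comp_le_left _ _).trans hA
          have h3 := h1.trans (Cardinal.lift_le.mpr h2)
          rw [Cardinal.lift_natCast] at h3
          have h4 : Cardinal.lift.{uF}
              (LinearMap.rank ((U : F →ₗ[ℂ] F') ∘ₗ ((A : E →ₗ[ℂ] F) ∘ₗ (V : E' →ₗ[ℂ] E))))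
              ≤ Cardinal.lift.{uF} ((k : Cardinal.{uF'})) := by
            rw [Cardinal.lift_natCast]; exact h3
          exact Cardinal.lift_le.mp h4
      _ ≤ ‖T - A‖ := by
          have heq : (U ∘L T ∘L V) - (U ∘L A ∘L V) = U ∘L ((T - A) ∘L V) := by
            rw [sub_comp, comp_sub]
          rw [heq]
          have h1 := opNorm_comp_le U ((T - A) ∘L V)
          have h2 := opNorm_comp_le (T - A) V
          nlinarith [norm_nonneg U, norm_nonneg V, norm_nonneg (T - A),
            norm_nonneg ((T - A) ∘L V), norm_nonneg (U ∘L ((T - A) ∘L V))]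

set_option maxHeartbeats 2000000 in
/-- with `R = K̃*K̃ ≥ 0` having a square root `R^{1/2}`, the singular values of
the compact operator `G = K̃ S K̃*` coincide with those of `R^{1/2} S R^{1/2}`. -/
theorem statement11 {H K : Type*}
    [NormedAddCommGroup H] [InnerProductSpace ℂ H] [CompleteSpace H]
    [NormedAddCommGroup K] [InnerProductSpace ℂ K] [CompleteSpace K]
    (Kt : K →L[ℂ] H) (S : K →L[ℂ] K) (hS : IsSelfAdjoint S)
    (Rsq : K →L[ℂ] K) (hRsq : IsSelfAdjoint Rsq)
    (hRsqNonneg : ∀ f : K, 0 ≤ (inner ℂ (Rsq f) f : ℂ).re)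
    (hRoot : Rsq ∘L Rsq = adjoint Kt ∘L Kt)
    (hGcompact : IsCompactOperator (Kt ∘L S ∘L adjoint Kt))
    (hPcompact : IsCompactOperator (Rsq ∘L S ∘L Rsq)) :
    ∀ k : ℕ, singularValue (Kt ∘L S ∘L adjoint Kt) k = singularValue (Rsq ∘L S ∘L Rsq) k := by
  have hRsq' : adjoint Rsq = Rsq := isSelfAdjoint_iff'.mp hRsq
  -- inner product identity
  have hinner : ∀ x u : K, (inner ℂ (Kt x) (Kt u) : ℂ) = inner ℂ (Rsq x) (Rsq u) := by
    intro x u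
    have h1 : (inner ℂ (Kt x) (Kt u) : ℂ) = inner ℂ x ((adjoint Kt ∘L Kt) u) := by
      rw [comp_apply, ← adjoint_inner_right]
    rw [h1, ← hRoot, comp_apply]
    calc (inner ℂ x (Rsq (Rsq u)) : ℂ) = inner ℂ x ((adjoint Rsq) (Rsq u)) := by rw [hRsq']
      _ = inner ℂ (Rsq x) (Rsq u) := adjoint_inner_right _ _ _
  have hnorm : ∀ x : K, ‖Kt x‖ = ‖Rsq x‖ := by
    intro x
    have h2 : ‖Kt x‖ ^ 2 = ‖Rsq x‖ ^ 2 := by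
      rw [← inner_self_eq_norm_sq (𝕜 := ℂ), ← inner_self_eq_norm_sq (𝕜 := ℂ), hinner]
    nlinarith [norm_nonneg (Kt x), norm_nonneg (Rsq x)]
  -- the dense subspace D = range Rsq and its closure E'
  set D : Submodule ℂ K := LinearMap.range (Rsq : K →ₗ[ℂ] K) with hD
  set E' : Submodule ℂ K := D.topologicalClosure with hE'
  haveI : CompleteSpace E' := (D.isClosed_topologicalClosure).completeSpace_coe
  -- the map f₀ : D →ₗ H, Rsq x ↦ Kt x
  have hker : LinearMap.ker (Rsq : K →ₗ[ℂ] K) ≤ LinearMap.ker (Kt : K →ₗ[ℂ] H) := by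
    intro x hx
    simp only [LinearMap.mem_ker, coe_coe] at hx ⊢
    have := hnorm x
    rw [show Rsq x = 0 from hx, norm_zero, norm_eq_zero] at this
    exact this
  set f0 : D →ₗ[ℂ] H :=
    ((LinearMap.ker (Rsq : K →ₗ[ℂ] K)).liftQ (Kt : K →ₗ[ℂ] H) hker).comp
      ((Rsq : K →ₗ[ℂ] K).quotKerEquivRange.symm.toLinearMap) with hf0
  have hf0_apply : ∀ (x : K) (h : Rsq x ∈ D), f0 ⟨Rsq x, h⟩ = Kt x := by
    intro x h
    have hq : ((Rsq : K →ₗ[ℂ] K).quotKerEquivRange).symm ⟨Rsq x, h⟩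
        = Submodule.Quotient.mk x := by
      rw [LinearEquiv.symm_apply_eq]
      ext
      exact ((Rsq : K →ₗ[ℂ] K).quotKerEquivRange_apply_mk x)
    rw [hf0]
    simp only [LinearMap.comp_apply, LinearEquiv.coe_toLinearMap, hq, Submodule.liftQ_apply]
    rfl
  have hf0_norm : ∀ d : D, ‖f0 d‖ = ‖d‖ := by
    rintro ⟨-, x, rfl⟩
    erw [hf0_apply x (LinearMap.mem_range_self _ x)]
    simpa using hnorm x
  set f : D →L[ℂ] H := f0.mkContinuous 1 (fun d => by rw [hf0_norm d, one_mul]) with hf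
  have hf_apply : ∀ d : D, f d = f0 d := fun d => rfl
  -- inclusion e : D →L E'
  have hDE : D ≤ E' := Submodule.le_topologicalClosure D
  set e : D →L[ℂ] E' := (Submodule.inclusion hDE).mkContinuous 1 (fun d => by
    rw [one_mul]; rfl) with he
  have he_apply : ∀ d : D, ((e d : E') : K) = (d : K) := fun d => rfl
  have he_norm : ∀ d : D, ‖e d‖ = ‖d‖ := fun d => rfl
  have he_iso : Isometry e := AddMonoidHomClass.isometry_of_norm e he_norm
  have h_dense : DenseRange e := by
    intro y
    have hy : (y : K) ∈ closure (D : Set K) := by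
      rw [← Submodule.topologicalClosure_coe]; exact y.2
    rw [mem_closure_iff_seq_limit] at hy
    obtain ⟨u, hu, hlim⟩ := hy
    rw [mem_closure_iff_seq_limit]
    refine ⟨fun n => e ⟨u n, hu n⟩, fun n => ⟨⟨u n, hu n⟩, rfl⟩, ?_⟩
    rw [tendsto_subtype_rng]
    exact hlim
  set ext : E' →L[ℂ] H := f.extend e with hext
  have hext_apply : ∀ d : D, ext (e d) = f d := fun d =>
    ContinuousLinearMap.extend_eq f h_dense he_iso.isUniformInducing d
  set W : K →L[ℂ] H := ext ∘L (Submodule.orthogonalProjection E' : K →L[ℂ] E') with hW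
  have hmemE : ∀ x : K, Rsq x ∈ E' := fun x => hDE (LinearMap.mem_range_self _ x)
  have hproj : ∀ x : K, Submodule.orthogonalProjection E' (Rsq x) = ⟨Rsq x, hmemE x⟩ :=
    fun x => Submodule.orthogonalProjection_mem_subspace_eq_self (⟨Rsq x, hmemE x⟩ : E')
  have hWR : ∀ x : K, W (Rsq x) = Kt x := by
    intro x
    rw [hW, comp_apply, hproj x]
    have hd : (⟨Rsq x, hmemE x⟩ : E') = e ⟨Rsq x, LinearMap.mem_range_self _ x⟩ :=
      Subtype.ext rfl
    rw [hd, hext_apply, hf_apply]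
    erw [hf0_apply]
  have hext_norm : ∀ z : E', ‖ext z‖ ≤ ‖z‖ := by
    intro z
    refine h_dense.induction_on z
      (isClosed_le (continuous_norm.comp ext.continuous) continuous_norm) (fun d => ?_)
    have : ‖ext (e d)‖ = ‖e d‖ := by rw [hext_apply, hf_apply, hf0_norm, he_norm]
    exact this.le
  have hWnorm : ‖W‖ ≤ 1 := by
    apply opNorm_le_bound _ zero_le_one
    intro x
    rw [one_mul, hW, comp_apply]
    refine (hext_norm _).trans ?_
    calc ‖((Submodule.orthogonalProjection E' : K →L[ℂ] E') x : E')‖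
        ≤ ‖(Submodule.orthogonalProjection E' : K →L[ℂ] E')‖ * ‖x‖ := le_opNorm _ x
      _ ≤ 1 * ‖x‖ :=
          mul_le_mul_of_nonneg_right (Submodule.orthogonalProjection_norm_le E') (norm_nonneg x)
      _ = ‖x‖ := one_mul _
  have hWinner : ∀ (x : K) (z : E'), (inner ℂ (Kt x) (ext z) : ℂ) = inner ℂ (Rsq x) (z : K) := by
    intro x z
    refine h_dense.induction_on z
      (isClosed_eq (Continuous.inner continuous_const ext.continuous)
        (Continuous.inner continuous_const continuous_subtype_val)) ?_
    rintro ⟨-, u, rfl⟩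
    rw [hext_apply, hf_apply]
    erw [hf0_apply]
    exact hinner x u
  have hWWR : adjoint W ∘L W ∘L Rsq = Rsq := by
    ext x
    simp only [comp_apply, coe_coe]
    apply ext_inner_right ℂ
    intro y
    rw [adjoint_inner_left, hWR x, hW, comp_apply, hWinner x]
    rw [show Rsq x = ((⟨Rsq x, hmemE x⟩ : E') : K) from rfl, ← Submodule.coe_inner,
      Submodule.inner_orthogonalProjectionOnto_eq_of_mem_left]
  have hRWW : Rsq ∘L (adjoint W ∘L W) = Rsq := by
    have h := congrArg (fun T : K →L[ℂ] K => adjoint T) hWWR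
    simp only [adjoint_comp, adjoint_adjoint, hRsq'] at h
    rw [← ContinuousLinearMap.comp_assoc]
    exact h
  have hKt : W ∘L Rsq = Kt := by ext x; exact hWR x
  have hKtadj : adjoint Kt = Rsq ∘L adjoint W := by
    rw [← hKt, adjoint_comp, hRsq']
  have hG : Kt ∘L S ∘L adjoint Kt = W ∘L (Rsq ∘L S ∘L Rsq) ∘L adjoint W := by
    rw [hKtadj, ← hKt]
    ext x; rfl
  have hP : adjoint W ∘L (Kt ∘L S ∘L adjoint Kt) ∘L W = Rsq ∘L S ∘L Rsq := by
    rw [hG]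
    ext x
    have e1 : Rsq ((adjoint W) (W x)) = Rsq x := DFunLike.congr_fun hRWW x
    have e2 : ∀ u : K, adjoint W (W (Rsq u)) = Rsq u := fun u => DFunLike.congr_fun hWWR u
    show adjoint W (W (Rsq (S (Rsq ((adjoint W) (W x)))))) = Rsq (S (Rsq x))
    rw [e1, e2]
  have hWadjnorm : ‖adjoint W‖ ≤ 1 := by
    rw [show ‖adjoint W‖ = ‖W‖ from LinearIsometryEquiv.norm_map ContinuousLinearMap.adjoint W]
    exact hWnorm
  intro k
  apply le_antisymm
  · calc singularValue (Kt ∘L S ∘L adjoint Kt) k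
        = singularValue (W ∘L (Rsq ∘L S ∘L Rsq) ∘L adjoint W) k := by rw [hG]
      _ ≤ singularValue (Rsq ∘L S ∘L Rsq) k :=
          singularValue_comp_le W (Rsq ∘L S ∘L Rsq) (adjoint W) hWnorm hWadjnorm k
  · calc singularValue (Rsq ∘L S ∘L Rsq) k
        = singularValue (adjoint W ∘L (Kt ∘L S ∘L adjoint Kt) ∘L W) k := by rw [hP]
      _ ≤ singularValue (Kt ∘L S ∘L adjoint Kt) k :=
          singularValue_comp_le (adjoint W) (Kt ∘L S ∘L adjoint Kt) W hWadjnorm hWnorm k
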